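/- Let i : S → T be an embedding of ordered trees, let x ∈ ℓ(S) be a non-largest leaf, and let x' be the ≤_S-smallest leaf with x <_S x'. Then the set {y ∈ ℓ(T) : i(x) ≤_T y <_T i(x') and i(x) ∧_T i(x') = y ∧_T i(x')} is nonempty (it contains every leaf above i(x)), and its ≤_T-largest element is the unique leaf of T that is i-conjugate to x. -/

import Mathlib

/-- An ordered tree: a finite poset (`tle`, the tree order `⊑`) with a root,
linearly ordered predecessor sets, binary meets, together with a linear order
`lin` (the lexicographic order `≤`) extending the tree order and coherent with
the tree structure (determined on subtrees above incomparable vertices). -/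
structure OTree (α : Type) [Finite α] where
  tle : α → α → Prop
  tle_refl : ∀ v, tle v v
  tle_trans : ∀ u v w, tle u v → tle v w → tle u w
  tle_antisymm : ∀ v w, tle v w → tle w v → v = w
  root : α
  root_le : ∀ v, tle root v
  pred_chain : ∀ v x y, tle x v → tle y v → tle x y ∨ tle y x
  meet : α → α → α
  meet_le_left : ∀ v w, tle (meet v w) v
  meet_le_right : ∀ v w, tle (meet v w) w
  le_meet : ∀ x v w, tle x v → tle x w → tle x (meet v w)
  lin : α → α → Prop
  lin_refl : ∀ v, lin v v
  lin_trans : ∀ u v w, lin u v → lin v w → lin u w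
  lin_antisymm : ∀ v w, lin v w → lin w v → v = w
  lin_total : ∀ v w, lin v w ∨ lin w v
  tle_lin : ∀ v w, tle v w → lin v w
  lex_coh : ∀ v w v' w', tle v v' → tle w w' → ¬ tle v w → ¬ tle w v → (lin v' w' ↔ lin v w)

variable {α β γ : Type} [Finite α] [Finite β] [Finite γ]

/-- A morphism of ordered trees: preserves meets, the lexicographic order, and the root. -/
def IsMorphism (S : OTree α) (T : OTree β) (e : α → β) : Prop :=
  (∀ v w, e (S.meet v w) = T.meet (e v) (e w)) ∧
  (∀ v w, S.lin v w → T.lin (e v) (e w)) ∧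
  e S.root = T.root

/-- An embedding is an injective morphism. -/
def IsEmbedding (S : OTree α) (T : OTree β) (e : α → β) : Prop :=
  IsMorphism S T e ∧ Function.Injective e

/-- `e` witnesses that `f : T → S` is a rigid surjection: `e` is a morphism with
`f ∘ e = id_S` and `e ∘ f ⊑_T id_T` pointwise.  Such `e` is called the injection of `f`. -/
def IsInjectionOf (T : OTree β) (S : OTree α) (f : β → α) (e : α → β) : Prop :=
  IsMorphism S T e ∧ (∀ v, f (e v) = v) ∧ (∀ w, T.tle (e (f w)) w)

/-- `f : T → S` is a rigid surjection. -/
def IsRigidSurj (T : OTree β) (S : OTree α) (f : β → α) : Prop :=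
  ∃ e, IsInjectionOf T S f e

/-- `e` maps the `≤_S`-largest vertex (= largest leaf) of `S` to the `≤_T`-largest
vertex of `T`. -/
def IsSealedInj (T : OTree β) (S : OTree α) (e : α → β) : Prop :=
  ∀ s t, (∀ v, S.lin v s) → (∀ w, T.lin w t) → e s = t

/-- A sealed rigid surjection. -/
def IsSealedRS (T : OTree β) (S : OTree α) (f : β → α) : Prop :=
  ∃ e, IsInjectionOf T S f e ∧ IsSealedInj T S e

/-- The initial subtree `T^v = {w : w ≤_T v}`. -/
def OTree.initSeg (T : OTree β) (v : β) : Set β := {w | T.lin w v}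

/-- Restriction of an ordered tree to a nonempty `⊑`-downward closed subset. -/
def OTree.restrict (T : OTree β) (T' : Set β) (hne : T'.Nonempty)
    (hdc : ∀ v w, T.tle v w → w ∈ T' → v ∈ T') : OTree T' where
  tle v w := T.tle v.1 w.1
  tle_refl v := T.tle_refl v.1
  tle_trans u v w h1 h2 := T.tle_trans u.1 v.1 w.1 h1 h2
  tle_antisymm v w h1 h2 := Subtype.ext (T.tle_antisymm v.1 w.1 h1 h2)
  root := ⟨T.root, hdc T.root hne.some (T.root_le hne.some) hne.some_mem⟩
  root_le v := T.root_le v.1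
  pred_chain v x y h1 h2 := T.pred_chain v.1 x.1 y.1 h1 h2
  meet v w := ⟨T.meet v.1 w.1, hdc (T.meet v.1 w.1) v.1 (T.meet_le_left v.1 w.1) v.2⟩
  meet_le_left v w := T.meet_le_left v.1 w.1
  meet_le_right v w := T.meet_le_right v.1 w.1
  le_meet x v w h1 h2 := T.le_meet x.1 v.1 w.1 h1 h2
  lin v w := T.lin v.1 w.1
  lin_refl v := T.lin_refl v.1
  lin_trans u v w h1 h2 := T.lin_trans u.1 v.1 w.1 h1 h2
  lin_antisymm v w h1 h2 := Subtype.ext (T.lin_antisymm v.1 w.1 h1 h2)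
  lin_total v w := T.lin_total v.1 w.1
  tle_lin v w h := T.tle_lin v.1 w.1 h
  lex_coh v w v' w' h1 h2 h3 h4 := T.lex_coh v.1 w.1 v'.1 w'.1 h1 h2 h3 h4

/-- The initial subtree `T^v` as an ordered tree. -/
def OTree.init (T : OTree β) (v : β) : OTree (T.initSeg v) :=
  T.restrict (T.initSeg v) ⟨v, T.lin_refl v⟩
    (fun a b hab hb => T.lin_trans a b v (T.tle_lin a b hab) hb)

/-- A leaf: a `⊑`-maximal vertex. -/
def OTree.Leaf (T : OTree β) (y : β) : Prop := ∀ w, T.tle y w → w = y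

/-- Strict lexicographic order. -/
def linLt (T : OTree β) (v w : β) : Prop := T.lin v w ∧ v ≠ w

/-- `y` is `i`-conjugate to `x` (for leaves `x` of `S`, `y` of `T`). -/
def Conj (S : OTree α) (T : OTree β) (i : α → β) (x : α) (y : β) : Prop :=
  S.Leaf x ∧ T.Leaf y ∧
  (((∀ z, S.Leaf z → S.lin z x) ∧ (∀ z, T.Leaf z → T.lin z y)) ∨
   (∃ x', S.Leaf x' ∧ linLt S x x' ∧ (∀ z, S.Leaf z → linLt S x z → S.lin x' z) ∧
      linLt T y (i x') ∧ T.meet (i x) (i x') = T.meet y (i x') ∧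
      (∀ z, T.Leaf z → linLt T z (i x') → T.meet (i x) (i x') = T.meet z (i x') → T.lin z y)))

theorem exists_leaf_above (T : OTree β) (v : β) : ∃ y, T.Leaf y ∧ T.tle v y := by
  letI : PartialOrder β :=
    { le := T.tle, le_refl := T.tle_refl, le_trans := T.tle_trans,
      le_antisymm := T.tle_antisymm }
  have hfin : ({w | T.tle v w} : Set β).Finite := Set.toFinite _
  obtain ⟨y, hy, hmax0⟩ := Set.Finite.exists_maximalFor id _ hfin ⟨v, T.tle_refl v⟩
  have hmax : ∀ w ∈ {w | T.tle v w}, id y ≤ id w → id y = id w :=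
    fun w hw h => le_antisymm h (hmax0 hw h)
  exact ⟨y, fun w hw => (hmax w (T.tle_trans v y w hy hw) hw).symm, hy⟩

theorem exists_lin_greatest (T : OTree β) (P : β → Prop) (hne : ∃ y, P y) :
    ∃ y, P y ∧ ∀ z, P z → T.lin z y := by
  letI : PartialOrder β :=
    { le := T.lin, le_refl := T.lin_refl, le_trans := T.lin_trans,
      le_antisymm := T.lin_antisymm }
  have hfin : ({w | P w} : Set β).Finite := Set.toFinite _
  obtain ⟨y, hy, hmax0⟩ := Set.Finite.exists_maximalFor id _ hfin hne
  have hmax : ∀ w ∈ {w | P w}, id y ≤ id w → id y = id w :=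
    fun w hw h => le_antisymm h (hmax0 hw h)
  refine ⟨y, hy, fun z hz => ?_⟩
  rcases T.lin_total z y with h | h
  · exact h
  · have e : y = z := hmax z hz h
    rw [← e]; exact T.lin_refl y

/-- For an embedding `i : S → T` and a non-largest leaf `x` of `S` with `x'` the
smallest leaf above it, the set `{y ∈ ℓ(T) : i x ≤ y < i x' and i x ∧ i x' = y ∧ i x'}`
is nonempty (it contains every leaf above `i x`), and its largest element is the
unique leaf of `T` that is `i`-conjugate to `x`. -/
theorem stmt10 (S : OTree α) (T : OTree β) (i : α → β) (hi : IsEmbedding S T i)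
    (x : α) (hx : S.Leaf x) (x' : α)
    (hx' : S.Leaf x' ∧ linLt S x x' ∧ ∀ z, S.Leaf z → linLt S x z → S.lin x' z) :
    (∃ y, T.Leaf y ∧ T.tle (i x) y) ∧
    (∀ y, T.Leaf y → T.tle (i x) y →
      T.lin (i x) y ∧ linLt T y (i x') ∧ T.meet (i x) (i x') = T.meet y (i x')) ∧
    (∃! y, Conj S T i x y) ∧
    (∀ y, Conj S T i x y →
      (T.Leaf y ∧ T.lin (i x) y ∧ linLt T y (i x') ∧
        T.meet (i x) (i x') = T.meet y (i x')) ∧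
      ∀ z, T.Leaf z → T.lin (i x) z → linLt T z (i x') →
        T.meet (i x) (i x') = T.meet z (i x') → T.lin z y) := by
  obtain ⟨⟨hmeet, hlin, hroot⟩, hinj⟩ := hi
  obtain ⟨hx'leaf, hxx', hmin⟩ := hx'
  have hxne : x ≠ x' := hxx'.2
  have hnc1 : ¬ S.tle x x' := fun h => hxne (hx x' h).symm
  have hnc2 : ¬ S.tle x' x := fun h => hxne (hx'leaf x h)
  have him : i (S.meet x x') = T.meet (i x) (i x') := hmeet x x'
  have hni1 : ¬ T.tle (i x) (i x') := by
    intro h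
    have h1 : T.meet (i x) (i x') = i x :=
      T.tle_antisymm _ _ (T.meet_le_left _ _) (T.le_meet _ _ _ (T.tle_refl _) h)
    have h2 : S.meet x x' = x := hinj (him.trans h1)
    exact hnc1 (h2 ▸ S.meet_le_right x x')
  have hni2 : ¬ T.tle (i x') (i x) := by
    intro h
    have h1 : T.meet (i x) (i x') = i x' :=
      T.tle_antisymm _ _ (T.meet_le_right _ _) (T.le_meet _ _ _ h (T.tle_refl _))
    have h2 : S.meet x x' = x' := hinj (him.trans h1)
    exact hnc2 (h2 ▸ S.meet_le_left x x')
  have hlinixx' : T.lin (i x) (i x') := hlin x x' hxx'.1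
  have key : ∀ y, T.Leaf y → T.tle (i x) y →
      T.lin (i x) y ∧ linLt T y (i x') ∧ T.meet (i x) (i x') = T.meet y (i x') := by
    intro y hyleaf hy
    have hyx'1 : ¬ T.tle y (i x') := fun h => hni1 (T.tle_trans _ _ _ hy h)
    have hyx'2 : ¬ T.tle (i x') y := by
      intro h
      rcases T.pred_chain y (i x) (i x') hy h with h1 | h1
      exacts [hni1 h1, hni2 h1]
    have hyne : y ≠ i x' := fun h => hyx'1 (h ▸ T.tle_refl y)
    have hlyx' : T.lin y (i x') :=
      (T.lex_coh (i x) (i x') y (i x') hy (T.tle_refl _) hni1 hni2).mpr hlinixx'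
    have hM1 : T.tle (T.meet (i x) (i x')) (T.meet y (i x')) :=
      T.le_meet _ _ _ (T.tle_trans _ _ _ (T.meet_le_left _ _) hy) (T.meet_le_right _ _)
    have hNx : T.tle (T.meet y (i x')) (i x) := by
      rcases T.pred_chain y (T.meet y (i x')) (i x) (T.meet_le_left _ _) hy with h | h
      · exact h
      · exact absurd (T.tle_trans _ _ _ h (T.meet_le_right y (i x'))) hni1
    have hM2 : T.tle (T.meet y (i x')) (T.meet (i x) (i x')) :=
      T.le_meet _ _ _ hNx (T.meet_le_right _ _)
    exact ⟨T.tle_lin _ _ hy, ⟨hlyx', hyne⟩, T.tle_antisymm _ _ hM1 hM2⟩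
  obtain ⟨y0, hy0leaf, hy0⟩ := exists_leaf_above T (i x)
  obtain ⟨ym, ⟨hymleaf, hymlt, hymm⟩, hymmax⟩ :=
    exists_lin_greatest T (fun z => T.Leaf z ∧ linLt T z (i x') ∧
      T.meet (i x) (i x') = T.meet z (i x'))
      ⟨y0, hy0leaf, (key y0 hy0leaf hy0).2⟩
  have hconj : Conj S T i x ym :=
    ⟨hx, hymleaf, Or.inr ⟨x', hx'leaf, hxx', hmin, hymlt, hymm,
      fun z hz h1 h2 => hymmax z ⟨hz, h1, h2⟩⟩⟩
  have hconjspec : ∀ y, Conj S T i x y →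
      T.Leaf y ∧ linLt T y (i x') ∧ T.meet (i x) (i x') = T.meet y (i x') ∧
      (∀ z, T.Leaf z → linLt T z (i x') → T.meet (i x) (i x') = T.meet z (i x') →
        T.lin z y) := by
    intro y hc
    obtain ⟨_, hyleaf, hcase⟩ := hc
    rcases hcase with ⟨h1, _⟩ | ⟨x'', hl'', hlt'', hmin'', hylt, hym, hymax⟩
    · exact absurd (S.lin_antisymm _ _ hxx'.1 (h1 x' hx'leaf)) hxx'.2
    · have hxx : x'' = x' :=
        S.lin_antisymm x'' x' (hmin'' x' hx'leaf hxx') (hmin x'' hl'' hlt'')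
      subst hxx
      exact ⟨hyleaf, hylt, hym, hymax⟩
  have huniq : ∀ y, Conj S T i x y → y = ym := by
    intro y hc
    obtain ⟨hyl, hylt, hym', hymax⟩ := hconjspec y hc
    exact T.lin_antisymm y ym (hymmax y ⟨hyl, hylt, hym'⟩)
      (hymax ym hymleaf hymlt hymm)
  refine ⟨⟨y0, hy0leaf, hy0⟩, key, ⟨ym, hconj, huniq⟩, ?_⟩
  intro y hc
  obtain ⟨hyl, hylt, hym', hymax⟩ := hconjspec y hc
  have hlxy : T.lin (i x) y := T.lin_trans _ y0 _ (T.tle_lin _ _ hy0)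
    (hymax y0 hy0leaf (key y0 hy0leaf hy0).2.1 (key y0 hy0leaf hy0).2.2)
  exact ⟨⟨hyl, hlxy, hylt, hym'⟩, fun z hzl _ h1 h2 => hymax z hzl h1 h2⟩
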